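/- Let $H$ be a Hilbert space, $K = \bigotimes_{k \in \mathbb{Z}} H$ an infinite tensor product with respect to a unit reference vector, $\sigma$ the right shift unitary on $K$, and $(P_{ij})$ projections on $H$ forming a magic unitary. For each $k$ let $P_{ij}^{(k)}$ denote $P_{ij}$ acting on the $k$-th tensor factor. Define $w_{ij} = \sigma P_{ij}^{(0)}$. Then $w_{ij}^* w_{ij} = P_{ij}^{(0)}$, $w_{ij} w_{ij}^* = P_{ij}^{(1)}$, and for any indices, $w_{i_1 j_1} \cdots w_{i_m j_m} = \sigma^m P_{i_1 j_1}^{(1-m)} \cdots P_{i_m j_m}^{(0)}$; in particular each product $w_{i_1 j_1} \cdots w_{i_m j_m}$ is a partial isometry whose source and range projections commute. -/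
import Mathlib


open ContinuousLinearMap

section Aux

variable {K : Type*} [NormedAddCommGroup K] [InnerProductSpace ℂ K] [CompleteSpace K] {N : ℕ}

/-- Product of shifted projections. -/
private def Lp (Q : ℤ → Fin N → Fin N → (K →L[ℂ] K)) (m : ℕ) (c : ℤ)
    (is js : Fin m → Fin N) : K →L[ℂ] K :=
  (List.ofFn fun t => Q (c + ((t : ℕ) : ℤ)) (is t) (js t)).prod

private lemma Lp_zero (Q : ℤ → Fin N → Fin N → (K →L[ℂ] K)) (c : ℤ)
    (is js : Fin 0 → Fin N) : Lp Q 0 c is js = 1 := by simp [Lp]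

private lemma Lp_succ (Q : ℤ → Fin N → Fin N → (K →L[ℂ] K)) (m : ℕ) (c : ℤ)
    (is js : Fin (m+1) → Fin N) :
    Lp Q (m+1) c is js =
      Q c (is 0) (js 0) *
        Lp Q m (c+1) (fun t => is t.succ) (fun t => js t.succ) := by
  unfold Lp
  rw [List.ofFn_succ, List.prod_cons]
  congr 2
  · simp
  · congr 1
    funext t
    have h : c + ((t.succ : ℕ) : ℤ) = c + 1 + ((t : ℕ) : ℤ) := by
      push_cast [Fin.val_succ]; ring
    rw [h]

private lemma comm_single (Q : ℤ → Fin N → Fin N → (K →L[ℂ] K))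
    (hQcomm : ∀ k k' i j i' j', k ≠ k' →
      Q k i j * Q k' i' j' = Q k' i' j' * Q k i j) :
    ∀ (m : ℕ) (c : ℤ) (is js : Fin m → Fin N) (k : ℤ) (i j : Fin N),
      (∀ t : Fin m, k ≠ c + ((t : ℕ) : ℤ)) →
      Q k i j * Lp Q m c is js = Lp Q m c is js * Q k i j := by
  intro m
  induction m with
  | zero => intro c is js k i j _; simp [Lp_zero]
  | succ n ih =>
    intro c is js k i j h
    have h0 : k ≠ c := by simpa using h 0
    have h1 : ∀ t : Fin n, k ≠ (c+1) + ((t : ℕ) : ℤ) := by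
      intro t
      have := h t.succ
      push_cast [Fin.val_succ] at this ⊢
      omega
    rw [Lp_succ, ← mul_assoc, hQcomm k c i j (is 0) (js 0) h0, mul_assoc,
      ih (c+1) _ _ k i j h1, ← mul_assoc, mul_assoc]

private lemma star_Lp (Q : ℤ → Fin N → Fin N → (K →L[ℂ] K))
    (hQsa : ∀ k i j, adjoint (Q k i j) = Q k i j)
    (hQcomm : ∀ k k' i j i' j', k ≠ k' →
      Q k i j * Q k' i' j' = Q k' i' j' * Q k i j) :
    ∀ (m : ℕ) (c : ℤ) (is js : Fin m → Fin N),
      star (Lp Q m c is js) = Lp Q m c is js := by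
  have hs : ∀ k i j, star (Q k i j) = Q k i j := by
    intro k i j; rw [star_eq_adjoint, hQsa]
  intro m
  induction m with
  | zero => intro c is js; simp [Lp_zero]
  | succ n ih =>
    intro c is js
    rw [Lp_succ, star_mul, ih, hs]
    exact (comm_single Q hQcomm n (c+1) _ _ c _ _ (by
      intro t
      have := t.isLt
      push_cast
      omega)).symm

private lemma Lp_idem (Q : ℤ → Fin N → Fin N → (K →L[ℂ] K))
    (hQidem : ∀ k i j, Q k i j * Q k i j = Q k i j)
    (hQcomm : ∀ k k' i j i' j', k ≠ k' →
      Q k i j * Q k' i' j' = Q k' i' j' * Q k i j) :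
    ∀ (m : ℕ) (c : ℤ) (is js : Fin m → Fin N),
      Lp Q m c is js * Lp Q m c is js = Lp Q m c is js := by
  intro m
  induction m with
  | zero => intro c is js; simp [Lp_zero]
  | succ n ih =>
    intro c is js
    have hcs : Q c (is 0) (js 0) * Lp Q n (c+1) (fun t => is t.succ) (fun t => js t.succ)
        = Lp Q n (c+1) (fun t => is t.succ) (fun t => js t.succ) * Q c (is 0) (js 0) :=
      comm_single Q hQcomm n (c+1) _ _ c _ _ (by
        intro t; have := t.isLt; push_cast; omega)
    rw [Lp_succ]
    calc Q c (is 0) (js 0) * Lp Q n (c+1) _ _ * (Q c (is 0) (js 0) * Lp Q n (c+1) _ _)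
        = Q c (is 0) (js 0) * (Lp Q n (c+1) _ _ * Q c (is 0) (js 0)) * Lp Q n (c+1) _ _ := by
          noncomm_ring
      _ = Q c (is 0) (js 0) * (Q c (is 0) (js 0) * Lp Q n (c+1) _ _) * Lp Q n (c+1) _ _ := by
          rw [hcs]
      _ = (Q c (is 0) (js 0) * Q c (is 0) (js 0)) * (Lp Q n (c+1) _ _ * Lp Q n (c+1) _ _) := by
          noncomm_ring
      _ = Q c (is 0) (js 0) * Lp Q n (c+1) _ _ := by rw [hQidem, ih]

private lemma comm_Lp (Q : ℤ → Fin N → Fin N → (K →L[ℂ] K))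
    (hQcomm : ∀ k k' i j i' j', k ≠ k' →
      Q k i j * Q k' i' j' = Q k' i' j' * Q k i j) :
    ∀ (m : ℕ) (c : ℤ) (is js : Fin m → Fin N)
      (m' : ℕ) (c' : ℤ) (is' js' : Fin m' → Fin N),
      (∀ (t : Fin m) (t' : Fin m'), c + ((t:ℕ):ℤ) ≠ c' + ((t':ℕ):ℤ)) →
      Lp Q m c is js * Lp Q m' c' is' js' = Lp Q m' c' is' js' * Lp Q m c is js := by
  intro m
  induction m with
  | zero => intro c is js m' c' is' js' _; simp [Lp_zero]
  | succ n ih =>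
    intro c is js m' c' is' js' h
    have h0 : ∀ t' : Fin m', c ≠ c' + ((t':ℕ):ℤ) := by
      intro t'; simpa using h 0 t'
    have h1 : ∀ (t : Fin n) (t' : Fin m'), (c+1) + ((t:ℕ):ℤ) ≠ c' + ((t':ℕ):ℤ) := by
      intro t t'
      have := h t.succ t'
      push_cast [Fin.val_succ] at this ⊢
      omega
    rw [Lp_succ, mul_assoc, ih (c+1) _ _ m' c' is' js' h1, ← mul_assoc,
      comm_single Q hQcomm m' c' is' js' c _ _ h0, mul_assoc, ← mul_assoc]

private lemma shift_pow (σ : K →L[ℂ] K) (Q : ℤ → Fin N → Fin N → (K →L[ℂ] K))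
    (hshift : ∀ k i j, σ * Q k i j = Q (k + 1) i j * σ) :
    ∀ (n : ℕ) (k : ℤ) (i j : Fin N),
      σ ^ n * Q k i j = Q (k + n) i j * σ ^ n := by
  intro n
  induction n with
  | zero => intro k i j; simp
  | succ n ih =>
    intro k i j
    have : σ ^ (n+1) = σ * σ ^ n := by rw [pow_succ']
    rw [this, mul_assoc, ih, ← mul_assoc, hshift, mul_assoc]
    congr 2
    push_cast; ring

private lemma shift_Lp (σ : K →L[ℂ] K) (Q : ℤ → Fin N → Fin N → (K →L[ℂ] K))
    (hshift : ∀ k i j, σ * Q k i j = Q (k + 1) i j * σ) :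
    ∀ (m : ℕ) (c : ℤ) (is js : Fin m → Fin N),
      σ * Lp Q m c is js = Lp Q m (c+1) is js * σ := by
  intro m
  induction m with
  | zero => intro c is js; simp [Lp_zero]
  | succ n ih =>
    intro c is js
    rw [Lp_succ, Lp_succ, ← mul_assoc, hshift, mul_assoc, ih, ← mul_assoc, mul_assoc]

private lemma shift_pow_Lp (σ : K →L[ℂ] K) (Q : ℤ → Fin N → Fin N → (K →L[ℂ] K))
    (hshift : ∀ k i j, σ * Q k i j = Q (k + 1) i j * σ) :
    ∀ (n : ℕ) (m : ℕ) (c : ℤ) (is js : Fin m → Fin N),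
      σ ^ n * Lp Q m c is js = Lp Q m (c + n) is js * σ ^ n := by
  intro n
  induction n with
  | zero => intro m c is js; simp
  | succ n ih =>
    intro m c is js
    have hp : σ ^ (n+1) = σ * σ ^ n := by rw [pow_succ']
    rw [hp, mul_assoc, ih, ← mul_assoc, shift_Lp σ Q hshift, mul_assoc]
    congr 2
    push_cast; ring

end Aux

/-- Let `K = ⨂_{k ∈ ℤ} H` be an infinite tensor product of a
Hilbert space `H` (with respect to a unit reference vector), `σ` the right shift
unitary on `K`, and `(P_{ij})` projections on `H` forming a magic unitary; let
`Q k i j = P_{ij}^{(k)}` denote `P_{ij}` acting on the `k`-th tensor factor (so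
that operators on distinct tensor factors commute and `σ P^{(k)} = P^{(k+1)} σ`).
Define `w_{ij} = σ P_{ij}^{(0)}`. Then `w_{ij}* w_{ij} = P_{ij}^{(0)}`,
`w_{ij} w_{ij}* = P_{ij}^{(1)}`, and for any indices
`w_{i₁j₁} ⋯ w_{iₘjₘ} = σ^m P_{i₁j₁}^{(1-m)} ⋯ P_{iₘjₘ}^{(0)}`; in particular each
such product is a partial isometry whose source and range projections commute. -/
theorem shifted_projection_partial_isometries
    {K : Type*} [NormedAddCommGroup K] [InnerProductSpace ℂ K] [CompleteSpace K]
    {N : ℕ}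
    (σ : K →L[ℂ] K) (hσ1 : σ * adjoint σ = 1) (hσ2 : adjoint σ * σ = 1)
    (Q : ℤ → Fin N → Fin N → (K →L[ℂ] K))
    (hQsa : ∀ k i j, adjoint (Q k i j) = Q k i j)
    (hQidem : ∀ k i j, Q k i j * Q k i j = Q k i j)
    (hQcomm : ∀ k k' i j i' j', k ≠ k' →
      Q k i j * Q k' i' j' = Q k' i' j' * Q k i j)
    (hQrow : ∀ k i, ∑ j, Q k i j = 1)
    (hQcol : ∀ k j, ∑ i, Q k i j = 1)
    (hshift : ∀ k i j, σ * Q k i j = Q (k + 1) i j * σ)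
    (w : Fin N → Fin N → (K →L[ℂ] K))
    (hw : ∀ i j, w i j = σ * Q 0 i j) :
    (∀ i j, adjoint (w i j) * w i j = Q 0 i j) ∧
    (∀ i j, w i j * adjoint (w i j) = Q 1 i j) ∧
    (∀ (m : ℕ) (is js : Fin m → Fin N),
      (List.ofFn fun t => w (is t) (js t)).prod =
        σ ^ m * (List.ofFn fun t =>
          Q (1 - (m : ℤ) + ((t : ℕ) : ℤ)) (is t) (js t)).prod) ∧
    (∀ (m : ℕ) (is js : Fin m → Fin N) (W : K →L[ℂ] K),
      W = (List.ofFn fun t => w (is t) (js t)).prod →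
        W * adjoint W * W = W ∧
          (adjoint W * W) * (W * adjoint W) = (W * adjoint W) * (adjoint W * W)) := by
  -- work with `star` instead of `adjoint`
  simp only [← star_eq_adjoint] at hσ1 hσ2 hQsa ⊢
  have hσm1 : ∀ n : ℕ, (star σ) ^ n * σ ^ n = 1 := by
    intro n
    induction n with
    | zero => simp
    | succ n ih =>
      have : (star σ) ^ (n+1) * σ ^ (n+1)
          = (star σ) ^ n * ((star σ * σ) * σ ^ n) := by
        rw [pow_succ, pow_succ']; noncomm_ring
      rw [this, hσ2, one_mul, ih]
  have hσm2 : ∀ n : ℕ, σ ^ n * (star σ) ^ n = 1 := by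
    intro n
    induction n with
    | zero => simp
    | succ n ih =>
      have : σ ^ (n+1) * (star σ) ^ (n+1)
          = σ ^ n * ((σ * star σ) * (star σ) ^ n) := by
        rw [pow_succ, pow_succ']; noncomm_ring
      rw [this, hσ1, one_mul, ih]
  -- part 1
  have part1 : ∀ i j, star (w i j) * w i j = Q 0 i j := by
    intro i j
    rw [hw, star_mul, hQsa]
    calc Q 0 i j * star σ * (σ * Q 0 i j)
        = Q 0 i j * (star σ * σ) * Q 0 i j := by noncomm_ring
      _ = Q 0 i j := by rw [hσ2, mul_one, hQidem]
  -- part 2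
  have part2 : ∀ i j, w i j * star (w i j) = Q 1 i j := by
    intro i j
    rw [hw, star_mul, hQsa]
    have h01 : σ * Q 0 i j = Q 1 i j * σ := by simpa using hshift 0 i j
    calc σ * Q 0 i j * (Q 0 i j * star σ)
        = σ * (Q 0 i j * Q 0 i j) * star σ := by noncomm_ring
      _ = σ * Q 0 i j * star σ := by rw [hQidem]
      _ = Q 1 i j * (σ * star σ) := by rw [h01]; noncomm_ring
      _ = Q 1 i j := by rw [hσ1, mul_one]
  -- part 3
  have part3 : ∀ (m : ℕ) (is js : Fin m → Fin N),
      (List.ofFn fun t => w (is t) (js t)).prod =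
        σ ^ m * Lp Q m (1 - (m : ℤ)) is js := by
    intro m
    induction m with
    | zero => intro is js; simp [Lp_zero]
    | succ n ih =>
      intro is js
      rw [List.ofFn_succ, List.prod_cons, ih, hw, Lp_succ]
      have hc : (1 : ℤ) - ((n+1 : ℕ) : ℤ) = -(n : ℤ) := by push_cast; ring
      have hc2 : -(n : ℤ) + 1 = 1 - (n : ℤ) := by ring
      rw [hc, hc2]
      have hsw : Q 0 (is 0) (js 0) * σ ^ n = σ ^ n * Q (-(n:ℤ)) (is 0) (js 0) := by
        have := shift_pow σ Q hshift n (-(n:ℤ)) (is 0) (js 0)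
        simp only [neg_add_cancel] at this
        exact this.symm
      calc σ * Q 0 (is 0) (js 0) * (σ ^ n * Lp Q n (1 - (n:ℤ)) _ _)
          = σ * (Q 0 (is 0) (js 0) * σ ^ n) * Lp Q n (1 - (n:ℤ)) _ _ := by noncomm_ring
        _ = σ * (σ ^ n * Q (-(n:ℤ)) (is 0) (js 0)) * Lp Q n (1 - (n:ℤ)) _ _ := by rw [hsw]
        _ = σ ^ (n+1) * (Q (-(n:ℤ)) (is 0) (js 0) * Lp Q n (1 - (n:ℤ)) _ _) := by
            rw [pow_succ']; noncomm_ring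
  -- part 4
  refine ⟨part1, part2, part3, ?_⟩
  intro m is js W hW
  set P := Lp Q m (1 - (m : ℤ)) is js with hP
  set P' := Lp Q m 1 is js with hP'
  have hWP : W = σ ^ m * P := by rw [hW, part3]
  have hPs : star P = P := star_Lp Q hQsa hQcomm m _ is js
  have hP2 : P * P = P := Lp_idem Q hQidem hQcomm m _ is js
  have hshiftP : σ ^ m * P = P' * σ ^ m := by
    have := shift_pow_Lp σ Q hshift m m (1 - (m:ℤ)) is js
    have hc : (1 : ℤ) - (m : ℤ) + (m : ℕ) = 1 := by push_cast; ring
    rw [hc] at this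
    exact this
  have hPP' : P * P' = P' * P :=
    comm_Lp Q hQcomm m (1 - (m:ℤ)) is js m 1 is js (by
      intro t t'
      have h1 := t.isLt
      have h2 := t'.isLt
      omega)
  have hstarW : star W = P * (star σ) ^ m := by
    rw [hWP, star_mul, hPs, star_pow]
  have hWsW : star W * W = P := by
    calc star W * W = P * ((star σ) ^ m * σ ^ m) * P := by
          rw [hstarW, hWP]; noncomm_ring
      _ = P := by rw [hσm1, mul_one, hP2]
  have hWWs : W * star W = P' := by
    calc W * star W = σ ^ m * (P * P) * (star σ) ^ m := by
          rw [hstarW, hWP]; noncomm_ring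
      _ = σ ^ m * P * (star σ) ^ m := by rw [hP2]
      _ = P' * (σ ^ m * (star σ) ^ m) := by rw [hshiftP]; noncomm_ring
      _ = P' := by rw [hσm2, mul_one]
  constructor
  · calc W * star W * W = P' * (σ ^ m * P) := by rw [hWWs, hWP]
      _ = P' * σ ^ m * P := by rw [mul_assoc]
      _ = σ ^ m * P * P := by rw [← hshiftP, mul_assoc]
      _ = σ ^ m * P := by rw [mul_assoc, hP2]
      _ = W := hWP.symm
  · rw [hWsW, hWWs, hPP']
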